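/- Let (Ω, 𝓕, P) be a probability space with filtration (𝓕_k). Let (h_k) be an adapted sequence of nonnegative integrable real random variables and (θ_k) an adapted sequence of nonnegative integrable real random variables, let (α_k) be nonnegative deterministic step sizes with ∑_k α_k² < ∞, and suppose there is a constant C ≥ 0 such that for every k, E[h_{k+1} − h_k | 𝓕_k] ≤ −2 α_k θ_k + α_k² C almost surely. Then almost surely the sequence h_k converges to a finite limit, and the series ∑_k α_k θ_k converges almost surely with ∑_k α_k E[θ_k] < ∞. -/

import Mathlib

open MeasureTheory Filter

/-- Quasi-martingale step of the SGD convergence proof: a nonnegative adapted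
integrable process `h_k` with `E[h_{k+1} − h_k | 𝓕_k] ≤ −2 α_k θ_k + α_k² C`,
`θ_k ≥ 0` adapted and `∑ α_k² < ∞`, converges almost surely, and the series
`∑ α_k θ_k` converges almost surely with `∑ α_k E[θ_k] < ∞`. -/
theorem stmt_10 {Ω : Type} {m0 : MeasurableSpace Ω} {P : Measure Ω}
    [IsProbabilityMeasure P] (𝓕 : Filtration ℕ m0)
    (h θ : ℕ → Ω → ℝ)
    (hhad : Adapted 𝓕 h) (hθad : Adapted 𝓕 θ)
    (hhnn : ∀ k ω, 0 ≤ h k ω) (hθnn : ∀ k ω, 0 ≤ θ k ω)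
    (hhint : ∀ k, Integrable (h k) P) (hθint : ∀ k, Integrable (θ k) P)
    (α : ℕ → ℝ) (hα : ∀ k, 0 ≤ α k) (hα2 : Summable fun k => α k ^ 2)
    (C : ℝ) (hC : 0 ≤ C)
    (hcond : ∀ k, P[fun ω => h (k + 1) ω - h k ω | 𝓕 k] ≤ᵐ[P]
      fun ω => -2 * α k * θ k ω + α k ^ 2 * C) :
    (∀ᵐ ω ∂P, ∃ l, Tendsto (fun k => h k ω) atTop (nhds l)) ∧
    (∀ᵐ ω ∂P, Summable fun k => α k * θ k ω) ∧
    Summable (fun k => α k * ∫ ω, θ k ω ∂P) := by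
  classical
  set S : ℝ := ∑' j, α j ^ 2 with hS
  set A : ℕ → ℝ := fun k => ∑ j ∈ Finset.range k, α j ^ 2 with hA
  have hAS : ∀ k, A k ≤ S := fun k =>
    hα2.sum_le_tsum (Finset.range k) (fun i _ => sq_nonneg _)
  set T : ℕ → Ω → ℝ := fun k ω => ∑ j ∈ Finset.range k, α j * θ j ω with hT
  set Y : ℕ → Ω → ℝ := fun k ω => h k ω + 2 * T k ω + C * (S - A k) with hY
  have hTnn : ∀ k ω, 0 ≤ T k ω := fun k ω =>
    Finset.sum_nonneg fun j _ => mul_nonneg (hα j) (hθnn j ω)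
  have hYnn : ∀ k ω, 0 ≤ Y k ω := fun k ω => by
    have := hAS k
    have := hhnn k ω
    have := hTnn k ω
    have : 0 ≤ C * (S - A k) := mul_nonneg hC (by linarith)
    simp only [hY]
    nlinarith [hTnn k ω, hhnn k ω]
  have hTmeas : ∀ k, StronglyMeasurable[𝓕 k] (T k) := by
    intro k
    apply Finset.stronglyMeasurable_fun_sum
    intro j hj
    have hjk : j ≤ k := le_of_lt (Finset.mem_range.mp hj)
    exact ((hθad j).stronglyMeasurable.mono (𝓕.mono hjk)).const_mul _
  have hTint : ∀ k, Integrable (T k) P := fun k =>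
    integrable_finset_sum _ fun j _ => (hθint j).const_mul _
  have hYad : StronglyAdapted 𝓕 Y := fun k =>
    ((hhad k).stronglyMeasurable.add ((hTmeas k).const_mul 2)).add_const _
  have hYint : ∀ k, Integrable (Y k) P := fun k =>
    (((hhint k).add ((hTint k).const_mul 2)).add (integrable_const _))
  -- supermartingale property
  have hsuper : Supermartingale Y 𝓕 P := by
    refine supermartingale_nat hYad hYint fun k => ?_
    set g : Ω → ℝ := fun ω => Y k ω + (2 * (α k * θ k ω) - C * α k ^ 2) with hg
    have hgmeas : StronglyMeasurable[𝓕 k] g :=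
      (hYad k).add ((((hθad k).stronglyMeasurable.const_mul _).const_mul 2).sub
        (stronglyMeasurable_const : StronglyMeasurable[𝓕 k] fun _ => C * α k ^ 2))
    have hgint : Integrable g P :=
      (hYint k).add ((((hθint k).const_mul _).const_mul 2).sub (integrable_const _))
    have hkey : Y (k + 1) = fun ω => (h (k + 1) ω - h k ω) + g ω := by
      funext ω
      simp only [hY, hg, hT, hA, Finset.sum_range_succ]
      ring
    have hdint : Integrable (fun ω => h (k + 1) ω - h k ω) P :=
      (hhint (k + 1)).sub (hhint k)
    have h1 : P[Y (k + 1)|𝓕 k] =ᵐ[P]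
        P[fun ω => h (k + 1) ω - h k ω|𝓕 k] + P[g|𝓕 k] := by
      rw [hkey]
      exact condExp_add hdint hgint _
    have h2 : P[g|𝓕 k] = g :=
      condExp_of_stronglyMeasurable (𝓕.le k) hgmeas hgint
    filter_upwards [h1, hcond k] with ω h1ω h3ω
    have heq : (P[Y (k + 1)|𝓕 k]) ω =
        (P[fun ω => h (k + 1) ω - h k ω|𝓕 k]) ω + (P[g|𝓕 k]) ω := h1ω
    rw [heq, h2]
    have : (P[fun ω => h (k + 1) ω - h k ω|𝓕 k]) ω ≤
        -2 * α k * θ k ω + α k ^ 2 * C := h3ω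
    simp only [hg]
    nlinarith
  -- expectation bound: ∫ Y n ≤ ∫ Y 0
  have hEle : ∀ n, ∫ ω, Y n ω ∂P ≤ ∫ ω, Y 0 ω ∂P := by
    intro n
    have hle := hsuper.2.1 0 n (Nat.zero_le n)
    calc ∫ ω, Y n ω ∂P = ∫ ω, (P[Y n|𝓕 0]) ω ∂P := (integral_condExp (𝓕.le 0)).symm
      _ ≤ ∫ ω, Y 0 ω ∂P := integral_mono_ae integrable_condExp (hYint 0) hle
  have hE0nn : 0 ≤ ∫ ω, Y 0 ω ∂P := integral_nonneg fun ω => hYnn 0 ω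
  -- L¹ bound and submartingale convergence for -Y
  have hbdd : ∀ n, eLpNorm ((-Y) n) 1 P ≤ (∫ ω, Y 0 ω ∂P).toNNReal := by
    intro n
    have : eLpNorm ((-Y) n) 1 P = eLpNorm (Y n) 1 P := by
      simp [eLpNorm_neg]
    rw [this, eLpNorm_one_eq_lintegral_enorm,
      ← ofReal_integral_norm_eq_lintegral_enorm (hYint n)]
    have hnorm : ∫ ω, ‖Y n ω‖ ∂P = ∫ ω, Y n ω ∂P := by
      congr 1
      funext ω
      exact Real.norm_of_nonneg (hYnn n ω)
    rw [hnorm]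
    exact ENNReal.ofReal_le_ofReal (hEle n)
  have hconv : ∀ᵐ ω ∂P, ∃ c, Tendsto (fun n => (-Y) n ω) atTop (nhds c) :=
    hsuper.neg.exists_ae_tendsto_of_bdd hbdd
  -- a.s. conclusions
  have hAtend : Tendsto A atTop (nhds S) := hα2.hasSum.tendsto_sum_nat
  have main : ∀ᵐ ω ∂P, (∃ l, Tendsto (fun k => h k ω) atTop (nhds l)) ∧
      Summable fun k => α k * θ k ω := by
    filter_upwards [hconv] with ω ⟨c, hc⟩
    have hYtend : Tendsto (fun n => Y n ω) atTop (nhds (-c)) := by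
      have := hc.neg
      simpa using this
    -- bound on partial sums
    obtain ⟨B, hB⟩ := hYtend.bddAbove_range
    have hTB : ∀ n, T n ω ≤ B / 2 := by
      intro n
      have h1 : Y n ω ≤ B := hB ⟨n, rfl⟩
      have h2 : 0 ≤ C * (S - A n) := mul_nonneg hC (by linarith [hAS n])
      have h3 := hhnn n ω
      simp only [hY] at h1
      linarith
    have hsum : Summable fun k => α k * θ k ω :=
      summable_of_sum_range_le (fun k => mul_nonneg (hα k) (hθnn k ω)) hTB
    refine ⟨?_, hsum⟩
    have hTtend : Tendsto (fun n => T n ω) atTop (nhds (∑' k, α k * θ k ω)) :=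
      hsum.hasSum.tendsto_sum_nat
    refine ⟨-c - 2 * (∑' k, α k * θ k ω) - C * (S - S), ?_⟩
    have : (fun k => h k ω) =
        fun k => Y k ω - 2 * T k ω - C * (S - A k) := by
      funext k; simp only [hY]; ring
    rw [this]
    exact (hYtend.sub ((hTtend.const_mul 2))).sub
      (((tendsto_const_nhds.sub hAtend).const_mul C))
  refine ⟨main.mono fun ω hω => hω.1, main.mono fun ω hω => hω.2, ?_⟩
  -- summability in expectation
  refine summable_of_sum_range_le
    (fun k => mul_nonneg (hα k) (integral_nonneg fun ω => hθnn k ω))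
    (c := (∫ ω, Y 0 ω ∂P) / 2) fun n => ?_
  have h1 : ∑ j ∈ Finset.range n, α j * ∫ ω, θ j ω ∂P = ∫ ω, T n ω ∂P := by
    rw [integral_finset_sum _ fun j _ => (hθint j).const_mul _]
    congr 1
    funext j
    rw [integral_const_mul]
  have h2 : ∫ ω, T n ω ∂P ≤ (∫ ω, Y n ω ∂P) / 2 := by
    have : ∀ ω, T n ω ≤ Y n ω / 2 := by
      intro ω
      have h2 : 0 ≤ C * (S - A n) := mul_nonneg hC (by linarith [hAS n])
      have h3 := hhnn n ω
      simp only [hY]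
      linarith
    calc ∫ ω, T n ω ∂P ≤ ∫ ω, Y n ω / 2 ∂P :=
          integral_mono (hTint n) ((hYint n).div_const 2) this
      _ = (∫ ω, Y n ω ∂P) / 2 := integral_div 2 _
  rw [h1]
  linarith [hEle n, h2]
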